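/- Let q1 = ((((κ−1)/n)+1)^{1/2} − 1)/((((κ−1)/n)+1)^{1/2} + 1) and x* ∈ ℝ^d be the vector whose ((i−1)p+j)-th coordinate equals q1^j for every i = 1,…,n and j = 1,…,p. Then x* is a global minimizer of F, i.e. F(x*) ≤ F(y) for all y ∈ ℝ^d (equivalently, ∇F(x*) = 0). -/

import Mathlib

open Finset

/-- The `p × p` tridiagonal matrix with diagonal entries `2` except the last one, which is `ξ`,
and `-1` on the sub- and super-diagonal. -/
noncomputable def Tmat (p : ℕ) (ξ : ℝ) : Matrix (Fin p) (Fin p) ℝ :=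
  fun j k =>
    if j = k then (if (j : ℕ) = p - 1 then ξ else 2)
    else if (j : ℕ) + 1 = (k : ℕ) ∨ (k : ℕ) + 1 = (j : ℕ) then -1 else 0

/-- The `d × d` matrix (`d = np`, coordinates indexed by `Fin n × Fin p`) which is zero outside
the `i`-th diagonal `p × p` block, and whose `i`-th diagonal block is `Tmat p ξ`. -/
noncomputable def Amat (n p : ℕ) (ξ : ℝ) (i : Fin n) :
    Matrix (Fin n × Fin p) (Fin n × Fin p) ℝ :=
  fun a b => if a.1 = i ∧ b.1 = i then Tmat p ξ a.2 b.2 else 0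

/-- The component function
`f_i(x) = ((L−μ)/4) ((1/2)⟨x, A_i x⟩ − ⟨e_{(i−1)p+1}, x⟩) + (μ/2)‖x‖²`. -/
noncomputable def fComp1 (n p : ℕ) [NeZero p] (L μ ξ : ℝ) (i : Fin n)
    (x : EuclideanSpace ℝ (Fin n × Fin p)) : ℝ :=
  ((L - μ) / 4) *
      ((1 / 2) * (∑ a : Fin n × Fin p, ∑ b : Fin n × Fin p, x a * Amat n p ξ i a b * x b)
        - x (i, 0)) +
    (μ / 2) * ‖x‖ ^ 2

private lemma qfred (m : ℕ) (ξ : ℝ) (W : ℕ → ℝ) :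
    ∑ j ∈ range (m+1), ∑ k ∈ range (m+1),
      W j * (if j = k then (if j = m then ξ else 2)
        else if j + 1 = k ∨ k + 1 = j then (-1:ℝ) else 0) * W k
    = (∑ j ∈ range (m+1), (if j = m then ξ else 2) * W j ^ 2)
      - 2 * ∑ j ∈ range m, W j * W (j+1) := by
  have hsplit : ∀ j k : ℕ, W j * (if j = k then (if j = m then ξ else 2)
        else if j + 1 = k ∨ k + 1 = j then (-1:ℝ) else 0) * W k
      = (if j = k then (if j = m then ξ else 2) * (W j * W k) else 0)
        + ((if j + 1 = k then -(W j * W k) else 0)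
          + (if k + 1 = j then -(W j * W k) else 0)) := by
    intro j k
    by_cases h1 : j = k
    · subst h1; simp
      split_ifs <;> ring
    · by_cases h2 : j + 1 = k
      · have h3 : ¬ (k + 1 = j) := by omega
        simp [h1, h2, h3]
      · by_cases h3 : k + 1 = j
        · simp [h1, h2, h3]
        · simp [h1, h2, h3]
  simp only [hsplit, Finset.sum_add_distrib]
  have tA : ∑ j ∈ range (m+1), ∑ k ∈ range (m+1),
      (if j = k then (if j = m then ξ else 2) * (W j * W k) else 0)
      = ∑ j ∈ range (m+1), (if j = m then ξ else 2) * W j ^ 2 := by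
    refine Finset.sum_congr rfl fun j hj => ?_
    rw [Finset.sum_ite_eq _ j, if_pos hj]; ring
  have tB : ∑ j ∈ range (m+1), ∑ k ∈ range (m+1),
      (if j + 1 = k then -(W j * W k) else 0)
      = - ∑ j ∈ range m, W j * W (j+1) := by
    have h1 : ∀ j : ℕ, ∑ k ∈ range (m+1), (if j + 1 = k then -(W j * W k) else 0)
        = if j + 1 ∈ range (m+1) then -(W j * W (j+1)) else 0 :=
      fun j => Finset.sum_ite_eq _ (j+1) _
    simp only [h1]
    rw [Finset.sum_range_succ, if_neg (by simp), add_zero, ← Finset.sum_neg_distrib]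
    refine Finset.sum_congr rfl fun j hj => ?_
    rw [if_pos (by simp at hj ⊢; omega)]
  have tC : ∑ j ∈ range (m+1), ∑ k ∈ range (m+1),
      (if k + 1 = j then -(W j * W k) else 0)
      = - ∑ j ∈ range m, W j * W (j+1) := by
    rw [Finset.sum_comm]
    have h1 : ∀ k : ℕ, ∑ j ∈ range (m+1), (if k + 1 = j then -(W j * W k) else 0)
        = if k + 1 ∈ range (m+1) then -(W (k+1) * W k) else 0 :=
      fun k => Finset.sum_ite_eq _ (k+1) _
    simp only [h1]
    rw [Finset.sum_range_succ, if_neg (by simp), add_zero, ← Finset.sum_neg_distrib]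
    refine Finset.sum_congr rfl fun j hj => ?_
    rw [if_pos (by simp at hj ⊢; omega)]; ring
  rw [tA, tB, tC]; ring

private lemma keysum (m : ℕ) (c μ ξ q1 : ℝ)
    (hI1 : (2*c+μ)*q1 = c*(1+q1^2)) (hI2 : (c*ξ+μ)*q1 = c) (w : ℕ → ℝ) :
    c * (∑ j ∈ range (m+1), ((if j = m then ξ else 2) * q1^(j+1) * w j))
      + μ * (∑ j ∈ range (m+1), q1^(j+1) * w j)
      - c * (∑ j ∈ range m, q1^(j+1) * w (j+1))
      - c * (∑ j ∈ range m, q1^(j+2) * w j)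
      - c * w 0 = 0 := by
  have h1 : ∑ j ∈ range m, q1^(j+1) * w (j+1)
      = ∑ j ∈ range (m+1), (if j = 0 then 0 else q1^j * w j) := by
    rw [Finset.sum_range_succ' (fun j => if j = 0 then 0 else q1^j * w j) m]
    simp
  have h2 : ∑ j ∈ range m, q1^(j+2) * w j
      = ∑ j ∈ range (m+1), (if j = m then 0 else q1^(j+2) * w j) := by
    rw [Finset.sum_range_succ, if_pos rfl, add_zero]
    refine Finset.sum_congr rfl fun j hj => ?_
    rw [if_neg (by simp at hj; omega)]
  have h3 : w 0 = ∑ j ∈ range (m+1), (if j = 0 then w j else 0) := by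
    rw [Finset.sum_ite_eq' (range (m+1)) 0 w, if_pos (by simp)]
  rw [h1, h2, h3, Finset.mul_sum, Finset.mul_sum, Finset.mul_sum, Finset.mul_sum,
    Finset.mul_sum, ← Finset.sum_add_distrib, ← Finset.sum_sub_distrib,
    ← Finset.sum_sub_distrib, ← Finset.sum_sub_distrib]
  refine Finset.sum_eq_zero fun j hj => ?_
  by_cases hj0 : j = 0
  · subst hj0
    by_cases hjm : (0:ℕ) = m
    · subst hjm
      simp only [if_pos rfl, if_true, mul_zero, sub_zero]
      linear_combination w 0 * hI2
    · simp only [if_neg hjm, if_pos rfl, if_true, mul_zero, sub_zero]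
      linear_combination w 0 * hI1
  · by_cases hjm : j = m
    · subst hjm
      simp only [if_pos rfl, if_true, if_neg hj0, mul_zero, sub_zero]
      linear_combination (q1^j * w j) * hI2
    · simp only [if_neg hjm, if_neg hj0, mul_zero, sub_zero]
      linear_combination (q1^j * w j) * hI1

private lemma sos (m : ℕ) (ξ : ℝ) (hξ1 : 1 ≤ ξ) (c μ : ℝ) (hc : 0 ≤ c) (hμ : 0 ≤ μ)
    (w : ℕ → ℝ) :
    0 ≤ (c/2) * ((∑ j ∈ range (m+1), (if j = m then ξ else 2) * w j ^ 2)
        - 2 * ∑ j ∈ range m, w j * w (j+1))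
      + (μ/2) * ∑ j ∈ range (m+1), w j ^ 2 := by
  have a1 : ∑ j ∈ range (m+1), (if j = m then ξ else 2) * w j ^ 2
      = 2 * (∑ j ∈ range m, w j ^ 2) + ξ * w m ^ 2 := by
    rw [Finset.sum_range_succ, if_pos rfl, Finset.mul_sum]
    congr 1
    refine Finset.sum_congr rfl fun j hj => ?_
    rw [if_neg (by simp at hj; omega)]
  have a2 : ∑ j ∈ range m, (w j - w (j+1))^2
      = (∑ j ∈ range m, w j ^ 2) + (∑ j ∈ range m, w (j+1) ^ 2)
        - 2 * ∑ j ∈ range m, w j * w (j+1) := by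
    rw [Finset.mul_sum, ← Finset.sum_add_distrib, ← Finset.sum_sub_distrib]
    exact Finset.sum_congr rfl fun j _ => by ring
  have a3 : ∑ j ∈ range m, w (j+1) ^ 2
      = (∑ j ∈ range (m+1), w j ^ 2) - w 0 ^ 2 := by
    rw [Finset.sum_range_succ' (fun j => w j ^ 2) m]; ring
  have a4 : ∑ j ∈ range (m+1), w j ^ 2 = (∑ j ∈ range m, w j ^ 2) + w m ^ 2 :=
    Finset.sum_range_succ _ _
  have h1 : 0 ≤ ∑ j ∈ range m, (w j - w (j+1))^2 :=
    Finset.sum_nonneg fun j _ => sq_nonneg _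
  have h2 : 0 ≤ ∑ j ∈ range (m+1), w j ^ 2 :=
    Finset.sum_nonneg fun j _ => sq_nonneg _
  have key : 0 ≤ (∑ j ∈ range (m+1), (if j = m then ξ else 2) * w j ^ 2)
      - 2 * ∑ j ∈ range m, w j * w (j+1) := by
    nlinarith [sq_nonneg (w 0), sq_nonneg (w m)]
  have k1 := mul_nonneg (by linarith : (0:ℝ) ≤ c/2) key
  have k2 := mul_nonneg (by linarith : (0:ℝ) ≤ μ/2) h2
  linarith

private lemma blockid (m : ℕ) (c μ ξ q1 : ℝ)
    (hI1 : (2*c+μ)*q1 = c*(1+q1^2)) (hI2 : (c*ξ+μ)*q1 = c)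
    (u w : ℕ → ℝ) (hu : ∀ j, u j = w j + q1^(j+1)) :
    ((c/2) * ((∑ j ∈ range (m+1), (if j = m then ξ else 2) * u j ^ 2)
        - 2 * ∑ j ∈ range m, u j * u (j+1))
      - c * u 0 + (μ/2) * ∑ j ∈ range (m+1), u j ^ 2)
    - ((c/2) * ((∑ j ∈ range (m+1), (if j = m then ξ else 2) * (q1^(j+1)) ^ 2)
        - 2 * ∑ j ∈ range m, q1^(j+1) * q1^(j+2))
      - c * q1 + (μ/2) * ∑ j ∈ range (m+1), (q1^(j+1)) ^ 2)
    = (c/2) * ((∑ j ∈ range (m+1), (if j = m then ξ else 2) * w j ^ 2)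
        - 2 * ∑ j ∈ range m, w j * w (j+1))
      + (μ/2) * ∑ j ∈ range (m+1), w j ^ 2 := by
  have key := keysum m c μ ξ q1 hI1 hI2 w
  have E1 : ∑ j ∈ range (m+1), (if j = m then ξ else 2) * u j ^ 2
      = (∑ j ∈ range (m+1), (if j = m then ξ else 2) * w j ^ 2)
        + 2 * (∑ j ∈ range (m+1), ((if j = m then ξ else 2) * q1^(j+1) * w j))
        + (∑ j ∈ range (m+1), (if j = m then ξ else 2) * (q1^(j+1)) ^ 2) := by
    rw [Finset.mul_sum, ← Finset.sum_add_distrib, ← Finset.sum_add_distrib]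
    exact Finset.sum_congr rfl fun j _ => by rw [hu j]; ring
  have E2 : ∑ j ∈ range m, u j * u (j+1)
      = (∑ j ∈ range m, w j * w (j+1)) + (∑ j ∈ range m, q1^(j+1) * w (j+1))
        + (∑ j ∈ range m, q1^(j+2) * w j) + (∑ j ∈ range m, q1^(j+1) * q1^(j+2)) := by
    rw [← Finset.sum_add_distrib, ← Finset.sum_add_distrib, ← Finset.sum_add_distrib]
    exact Finset.sum_congr rfl fun j _ => by rw [hu j, hu (j+1)]; ring
  have E3 : ∑ j ∈ range (m+1), u j ^ 2
      = (∑ j ∈ range (m+1), w j ^ 2) + 2 * (∑ j ∈ range (m+1), q1^(j+1) * w j)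
        + (∑ j ∈ range (m+1), (q1^(j+1)) ^ 2) := by
    rw [Finset.mul_sum, ← Finset.sum_add_distrib, ← Finset.sum_add_distrib]
    exact Finset.sum_congr rfl fun j _ => by rw [hu j]; ring
  rw [E1, E2, E3, hu 0]
  linear_combination key

private noncomputable def Xf (n p : ℕ) (x : EuclideanSpace ℝ (Fin n × Fin p)) (i : Fin n)
    (j : ℕ) : ℝ :=
  if h : j < p then x (i, ⟨j, h⟩) else 0

private lemma amat_block (n p : ℕ) (ξ : ℝ) (i : Fin n)
    (x : EuclideanSpace ℝ (Fin n × Fin p)) :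
    (∑ a : Fin n × Fin p, ∑ b : Fin n × Fin p, x a * Amat n p ξ i a b * x b)
    = ∑ j : Fin p, ∑ k : Fin p, x (i, j) * Tmat p ξ j k * x (i, k) := by
  simp only [Amat, Fintype.sum_prod_type, mul_ite, mul_zero, ite_mul, zero_mul, ite_and,
    Finset.sum_ite_irrel, Finset.sum_const_zero, Finset.sum_ite_eq', Finset.mem_univ, if_true]

private lemma block_to_nat (n m : ℕ) (ξ : ℝ) (i : Fin n)
    (x : EuclideanSpace ℝ (Fin n × Fin (m+1))) :
    (∑ j : Fin (m+1), ∑ k : Fin (m+1), x (i, j) * Tmat (m+1) ξ j k * x (i, k))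
    = ∑ j ∈ range (m+1), ∑ k ∈ range (m+1),
        Xf n (m+1) x i j * (if j = k then (if j = m then ξ else 2)
          else if j + 1 = k ∨ k + 1 = j then (-1:ℝ) else 0) * Xf n (m+1) x i k := by
  rw [← Fin.sum_univ_eq_sum_range (fun j => ∑ k ∈ range (m+1),
        Xf n (m+1) x i j * (if j = k then (if j = m then ξ else 2)
          else if j + 1 = k ∨ k + 1 = j then (-1:ℝ) else 0) * Xf n (m+1) x i k) (m+1)]
  refine Finset.sum_congr rfl fun j _ => ?_
  rw [← Fin.sum_univ_eq_sum_range (fun k =>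
        Xf n (m+1) x i (j:ℕ) * (if (j:ℕ) = k then (if (j:ℕ) = m then ξ else 2)
          else if (j:ℕ) + 1 = k ∨ k + 1 = (j:ℕ) then (-1:ℝ) else 0) * Xf n (m+1) x i k) (m+1)]
  refine Finset.sum_congr rfl fun k _ => ?_
  simp [Xf, Tmat, Fin.ext_iff, Fin.is_le]

private lemma norm_sq_eq (n m : ℕ) (x : EuclideanSpace ℝ (Fin n × Fin (m+1))) :
    ‖x‖^2 = ∑ i : Fin n, ∑ j ∈ range (m+1), (Xf n (m+1) x i j)^2 := by
  rw [EuclideanSpace.norm_eq, Real.sq_sqrt (by positivity), Fintype.sum_prod_type]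
  refine Finset.sum_congr rfl fun i _ => ?_
  rw [← Fin.sum_univ_eq_sum_range (fun j => (Xf n (m+1) x i j)^2) (m+1)]
  refine Finset.sum_congr rfl fun j _ => ?_
  simp [Xf, Real.norm_eq_abs, sq_abs, Fin.is_le, not_lt.2 (Fin.is_le j)]

private lemma gen_comb (n : ℕ) (hn : 0 < n) (L μ c : ℝ) (hc : c = (L - μ)/(4*n))
    (Q X0 S : Fin n → ℝ) :
    (1/(n:ℝ)) * ∑ i : Fin n, ((L - μ)/4 * (1/2 * Q i - X0 i) + μ/2 * ∑ i' : Fin n, S i')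
    = ∑ i : Fin n, ((c/2) * Q i - c * X0 i + (μ/2) * S i) := by
  have hn' : (n:ℝ) ≠ 0 := Nat.cast_ne_zero.2 hn.ne'
  rw [Finset.sum_add_distrib, Finset.sum_const, Finset.card_univ, Fintype.card_fin,
    nsmul_eq_mul, Finset.sum_add_distrib, mul_add]
  congr 1
  · rw [Finset.mul_sum]
    refine Finset.sum_congr rfl fun i _ => ?_
    rw [hc]; field_simp
  · rw [← Finset.mul_sum]
    field_simp

/-- The vector `x*` whose `((i−1)p+j)`-th coordinate is `q1^j` is a global minimizer of
`F = (1/n) ∑ f_i` for the hard instance of Case (1). -/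
theorem stmt0 (n p : ℕ) (hn : 2 ≤ n) [NeZero p] (hp : 1 ≤ p)
    (L μ κ ξ q1 : ℝ) (hμ : 0 < μ) (hLμ : μ < L) (hκ : κ = L / μ)
    (hξ : ξ = (Real.sqrt ((κ - 1) / n + 1) + 3) / (Real.sqrt ((κ - 1) / n + 1) + 1))
    (hq1 : q1 = (Real.sqrt ((κ - 1) / n + 1) - 1) / (Real.sqrt ((κ - 1) / n + 1) + 1))
    (F : EuclideanSpace ℝ (Fin n × Fin p) → ℝ)
    (hF : F = fun x => (1 / (n : ℝ)) * ∑ i : Fin n, fComp1 n p L μ ξ i x)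
    (xstar : EuclideanSpace ℝ (Fin n × Fin p))
    (hxstar : ∀ (i : Fin n) (j : Fin p), xstar (i, j) = q1 ^ ((j : ℕ) + 1)) :
    ∀ y : EuclideanSpace ℝ (Fin n × Fin p), F xstar ≤ F y := by
  obtain ⟨m, rfl⟩ : ∃ m, p = m + 1 := ⟨p - 1, (Nat.succ_pred_eq_of_pos hp).symm⟩
  intro y
  have hn0 : (0:ℝ) < n := by exact_mod_cast (by omega : 0 < n)
  set s := Real.sqrt ((κ - 1) / n + 1) with hs_def
  have hκ1 : 1 < κ := by rw [hκ]; exact (one_lt_div hμ).2 hLμ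
  have harg : (0:ℝ) ≤ (κ - 1)/n + 1 := by
    have : (0:ℝ) ≤ (κ - 1)/n := div_nonneg (by linarith) hn0.le
    linarith
  have hs2 : s^2 = (κ - 1)/n + 1 := Real.sq_sqrt harg
  have hs0 : 0 ≤ s := Real.sqrt_nonneg _
  have hs1 : 1 < s := by nlinarith [div_pos (by linarith : (0:ℝ) < κ - 1) hn0]
  set c := (L - μ)/(4*(n:ℝ)) with hc_def
  have hc : 0 < c := div_pos (by linarith) (by linarith)
  have hc4 : μ * (s^2 - 1) = 4*c := by
    rw [hs2, hc_def, hκ]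
    field_simp
    ring
  have hsp1 : s + 1 ≠ 0 := by positivity
  have hI1 : (2*c + μ)*q1 = c*(1 + q1^2) := by
    rw [hq1]
    field_simp
    nlinarith [hc4]
  have hI2 : (c*ξ + μ)*q1 = c := by
    rw [hq1, hξ]
    field_simp
    nlinarith [hc4]
  have hξ1 : 1 ≤ ξ := by
    rw [hξ, le_div_iff₀ (by linarith)]
    linarith
  have hFeq : ∀ x : EuclideanSpace ℝ (Fin n × Fin (m+1)), F x
      = ∑ i : Fin n, ((c/2) * ((∑ j ∈ range (m+1),
            (if j = m then ξ else 2) * (Xf n (m+1) x i j)^2)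
          - 2 * ∑ j ∈ range m, Xf n (m+1) x i j * Xf n (m+1) x i (j+1))
        - c * Xf n (m+1) x i 0 + (μ/2) * ∑ j ∈ range (m+1), (Xf n (m+1) x i j)^2) := by
    intro x
    rw [hF]
    simp only [fComp1]
    have hBi : ∀ i : Fin n,
        (∑ a : Fin n × Fin (m+1), ∑ b : Fin n × Fin (m+1), x a * Amat n (m+1) ξ i a b * x b)
        = (∑ j ∈ range (m+1), (if j = m then ξ else 2) * (Xf n (m+1) x i j)^2)
          - 2 * ∑ j ∈ range m, Xf n (m+1) x i j * Xf n (m+1) x i (j+1) :=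
      fun i => (amat_block n (m+1) ξ i x).trans
        ((block_to_nat n m ξ i x).trans (qfred m ξ (Xf n (m+1) x i)))
    have hx0 : ∀ i : Fin n, x (i, 0) = Xf n (m+1) x i 0 := fun i => by simp [Xf]
    rw [norm_sq_eq n m x]
    simp only [hBi, hx0]
    exact gen_comb n (by omega) L μ c hc_def
      (fun i => (∑ j ∈ range (m+1), (if j = m then ξ else 2) * (Xf n (m+1) x i j)^2)
          - 2 * ∑ j ∈ range m, Xf n (m+1) x i j * Xf n (m+1) x i (j+1))
      (fun i => Xf n (m+1) x i 0)
      (fun i => ∑ j ∈ range (m+1), (Xf n (m+1) x i j)^2)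
  rw [hFeq y, hFeq xstar]
  refine Finset.sum_le_sum fun i _ => ?_
  have hV : ∀ j, j < m + 1 → Xf n (m+1) xstar i j = q1^(j+1) := by
    intro j hj
    have h := hxstar i ⟨j, hj⟩
    simpa [Xf, hj] using h
  have e1 : ∑ j ∈ range (m+1), (if j = m then ξ else 2) * (Xf n (m+1) xstar i j)^2
      = ∑ j ∈ range (m+1), (if j = m then ξ else 2) * (q1^(j+1))^2 :=
    Finset.sum_congr rfl fun j hj => by rw [hV j (mem_range.1 hj)]
  have e2 : ∑ j ∈ range m, Xf n (m+1) xstar i j * Xf n (m+1) xstar i (j+1)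
      = ∑ j ∈ range m, q1^(j+1) * q1^(j+2) :=
    Finset.sum_congr rfl fun j hj => by
      have hj' := mem_range.1 hj
      rw [hV j (by omega), hV (j+1) (by omega)]
  have e3 : ∑ j ∈ range (m+1), (Xf n (m+1) xstar i j)^2
      = ∑ j ∈ range (m+1), (q1^(j+1))^2 :=
    Finset.sum_congr rfl fun j hj => by rw [hV j (mem_range.1 hj)]
  have e4 : Xf n (m+1) xstar i 0 = q1 := by
    rw [hV 0 (by omega)]; norm_num
  rw [e1, e2, e3, e4]
  have hdiff := blockid m c μ ξ q1 hI1 hI2 (Xf n (m+1) y i)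
      (fun j => Xf n (m+1) y i j - q1^(j+1)) (fun j => by ring)
  have hpos := sos m ξ hξ1 c μ hc.le hμ.le (fun j => Xf n (m+1) y i j - q1^(j+1))
  linarith [hdiff, hpos]
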